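/- Let ψ : I𝔻 → I𝔻 be a monotone interval function realizing a continuous function f : [0,1] → ℝ (i.e., for every x ∈ [0,1] and every nested sequence (J_n) of dyadic intervals with intersection {x}, the sequence (ψ(J_n)) is nested with intersection {f(x)}). If ν(n) := min{N : ∀ J dyadic with diam(J) ≤ 2^{-N} and J ∩ [0,1] ≠ ∅, diam(ψ(J)) ≤ 2^{-n}} is well-defined, then the function n ↦ ν(n) + 1 is a modulus of continuity of f: |x − y| ≤ 2^{-ν(n)-1} implies |f(x) − f(y)| ≤ 2^{-n} for x, y ∈ [0,1]. -/

import Mathlib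

/-- A closed interval of reals with dyadic rational endpoints. -/
structure DI where
  lo : ℝ
  hi : ℝ
  dyadic_lo : ∃ (r : ℤ) (n : ℕ), lo = (r : ℝ) / 2 ^ n
  dyadic_hi : ∃ (r : ℤ) (n : ℕ), hi = (r : ℝ) / 2 ^ n
  lo_le_hi : lo ≤ hi

/-- The set of reals belonging to a dyadic interval. -/
def DI.set (J : DI) : Set ℝ := Set.Icc J.lo J.hi

/-- The diameter of a dyadic interval. -/
def DI.diam (J : DI) : ℝ := J.hi - J.lo

/-- An interval function is monotone if it respects inclusion of intervals. -/
def IntervalMonotone (ψ : DI → DI) : Prop :=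
  ∀ J J' : DI, J.set ⊆ J'.set → (ψ J).set ⊆ (ψ J').set

/-- `ψ` realizes `f : [0,1] → ℝ` as an interval function: it maps every nested
sequence of dyadic intervals with intersection `{x}` (for `x ∈ [0,1]`) to a nested
sequence of dyadic intervals with intersection `{f x}`. -/
def Realizes (ψ : DI → DI) (f : ℝ → ℝ) : Prop :=
  ∀ x ∈ Set.Icc (0 : ℝ) 1, ∀ J : ℕ → DI,
    (∀ n, (J (n + 1)).set ⊆ (J n).set) → (⋂ n, (J n).set) = {x} →
      (∀ n, (ψ (J (n + 1))).set ⊆ (ψ (J n)).set) ∧ (⋂ n, (ψ (J n)).set) = {f x}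

/-- The parameter of a monotone interval name of `f` encodes a modulus of uniform
continuity of `f`: `n ↦ ν(n) + 1` is a modulus of continuity. -/
lemma mem_psi_of_mem (ψ : DI → DI) (f : ℝ → ℝ) (hmono : IntervalMonotone ψ)
    (hreal : Realizes ψ f) (x : ℝ) (hx : x ∈ Set.Icc (0:ℝ) 1)
    (J : DI) (hxJ : x ∈ J.set) : f x ∈ (ψ J).set := by
  have h2 : ∀ n : ℕ, (0:ℝ) < 2 ^ n := fun n => by positivity
  have e : ∀ n : ℕ, (1/2:ℝ)^n * 2^n = 1 := fun n => by
    rw [← mul_pow]; norm_num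
  obtain ⟨hlo, hhi⟩ := hxJ
  have hfl : ∀ n : ℕ, ((⌊x * 2^n⌋ : ℝ))/2^n ≤ x := fun n => by
    rw [div_le_iff₀ (h2 n)]; exact Int.floor_le _
  have hcl : ∀ n : ℕ, x ≤ ((⌈x * 2^n⌉ : ℝ))/2^n := fun n => by
    rw [le_div_iff₀ (h2 n)]; exact Int.le_ceil _
  have hfl' : ∀ n : ℕ, x - (1/2)^n ≤ ((⌊x * 2^n⌋ : ℝ))/2^n := fun n => by
    rw [le_div_iff₀ (h2 n), sub_mul, e n]
    have := Int.sub_one_lt_floor (x * 2^n)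
    linarith
  have hcl' : ∀ n : ℕ, ((⌈x * 2^n⌉ : ℝ))/2^n ≤ x + (1/2)^n := fun n => by
    rw [div_le_iff₀ (h2 n), add_mul, e n]
    have := Int.ceil_lt_add_one (x * 2^n)
    linarith
  have hflmono : ∀ n : ℕ, ((⌊x * 2^n⌋ : ℝ))/2^n ≤ ((⌊x * 2^(n+1)⌋ : ℝ))/2^(n+1) := by
    intro n
    rw [div_le_div_iff₀ (h2 n) (h2 (n+1))]
    have hint : 2 * ⌊x * 2^n⌋ ≤ ⌊x * 2^(n+1)⌋ := by
      rw [Int.le_floor]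
      push_cast
      have h1 := Int.floor_le (x * 2^n)
      rw [pow_succ]
      calc (2:ℝ) * ⌊x * 2^n⌋ ≤ 2 * (x * 2^n) := by linarith
        _ = x * (2^n * 2) := by ring
    have hc : (2:ℝ) * (⌊x * 2^n⌋:ℝ) ≤ (⌊x * 2^(n+1)⌋:ℝ) := by exact_mod_cast hint
    calc ((⌊x * 2^n⌋:ℝ)) * 2^(n+1) = (2 * (⌊x * 2^n⌋:ℝ)) * 2^n := by rw [pow_succ]; ring
      _ ≤ ((⌊x * 2^(n+1)⌋:ℝ)) * 2^n := mul_le_mul_of_nonneg_right hc (h2 n).le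
  have hclmono : ∀ n : ℕ, ((⌈x * 2^(n+1)⌉ : ℝ))/2^(n+1) ≤ ((⌈x * 2^n⌉ : ℝ))/2^n := by
    intro n
    rw [div_le_div_iff₀ (h2 (n+1)) (h2 n)]
    have hint : ⌈x * 2^(n+1)⌉ ≤ 2 * ⌈x * 2^n⌉ := by
      rw [Int.ceil_le]
      push_cast
      have h1 := Int.le_ceil (x * 2^n)
      rw [pow_succ]
      calc x * (2^n * 2) = 2 * (x * 2^n) := by ring
        _ ≤ (2:ℝ) * ⌈x * 2^n⌉ := by linarith
    have hc : (⌈x * 2^(n+1)⌉:ℝ) ≤ (2:ℝ) * (⌈x * 2^n⌉:ℝ) := by exact_mod_cast hint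
    calc ((⌈x * 2^(n+1)⌉:ℝ)) * 2^n ≤ (2 * (⌈x * 2^n⌉:ℝ)) * 2^n :=
        mul_le_mul_of_nonneg_right hc (h2 n).le
      _ = ((⌈x * 2^n⌉:ℝ)) * 2^(n+1) := by rw [pow_succ]; ring
  set K : ℕ → DI := fun n =>
    { lo := max J.lo ((⌊x * 2^n⌋ : ℝ)/2^n)
      hi := min J.hi ((⌈x * 2^n⌉ : ℝ)/2^n)
      dyadic_lo := by
        rcases max_cases J.lo ((⌊x * 2^n⌋ : ℝ)/2^n) with ⟨h, _⟩ | ⟨h, _⟩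
        · rw [h]; exact J.dyadic_lo
        · rw [h]; exact ⟨⌊x * 2^n⌋, n, rfl⟩
      dyadic_hi := by
        rcases min_cases J.hi ((⌈x * 2^n⌉ : ℝ)/2^n) with ⟨h, _⟩ | ⟨h, _⟩
        · rw [h]; exact J.dyadic_hi
        · rw [h]; exact ⟨⌈x * 2^n⌉, n, rfl⟩
      lo_le_hi := le_trans (max_le hlo (hfl n)) (le_min hhi (hcl n)) } with hK
  have haxn : ∀ n, (K n).lo ≤ x := fun n => max_le hlo (hfl n)
  have hxbn : ∀ n, x ≤ (K n).hi := fun n => le_min hhi (hcl n)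
  have hnest : ∀ n, (K (n+1)).set ⊆ (K n).set := by
    intro n
    apply Set.Icc_subset_Icc
    · exact max_le_max le_rfl (hflmono n)
    · exact min_le_min le_rfl (hclmono n)
  have hinter : (⋂ n, (K n).set) = {x} := by
    apply Set.eq_singleton_iff_unique_mem.2
    constructor
    · exact Set.mem_iInter.2 fun n => ⟨haxn n, hxbn n⟩
    · intro z hz
      by_contra hne
      obtain ⟨n, hn⟩ := exists_pow_lt_of_lt_one (abs_pos.2 (sub_ne_zero.2 hne))
        (by norm_num : (1/2:ℝ) < 1)
      obtain ⟨h1, h2'⟩ := Set.mem_iInter.1 hz n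
      have hl : x - (1/2)^n ≤ (K n).lo := le_max_of_le_right (hfl' n)
      have hr : (K n).hi ≤ x + (1/2)^n := min_le_of_right_le (hcl' n)
      cases abs_cases (z - x) with
      | inl h => linarith [h.1]
      | inr h => linarith [h.1]
  obtain ⟨_, hU⟩ := hreal x hx K hnest hinter
  have hmem : f x ∈ ⋂ n, (ψ (K n)).set := by rw [hU]; exact rfl
  have h0 : f x ∈ (ψ (K 0)).set := Set.mem_iInter.1 hmem 0
  exact hmono (K 0) J (Set.Icc_subset_Icc (le_max_left _ _) (min_le_left _ _)) h0


theorem parameter_encodes_modulus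
    (f : ℝ → ℝ) (hf : ContinuousOn f (Set.Icc (0 : ℝ) 1))
    (ψ : DI → DI) (hmono : IntervalMonotone ψ) (hreal : Realizes ψ f)
    (ν : ℕ → ℕ)
    (hν : ∀ n, IsLeast
      {N : ℕ | ∀ J : DI, (J.set ∩ Set.Icc (0 : ℝ) 1).Nonempty →
        J.diam ≤ (1 / 2 : ℝ) ^ N → (ψ J).diam ≤ (1 / 2 : ℝ) ^ n} (ν n)) :
    ∀ x ∈ Set.Icc (0 : ℝ) 1, ∀ y ∈ Set.Icc (0 : ℝ) 1, ∀ n : ℕ,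
      |x - y| ≤ (1 / 2 : ℝ) ^ (ν n + 1) → |f x - f y| ≤ (1 / 2 : ℝ) ^ n := by
  intro x hx y hy n hxy
  set N := ν n + 1 with hN
  set c : ℝ := 2 ^ N with hc
  have hcpos : (0:ℝ) < c := by positivity
  have hec : (1/2:ℝ)^N * c = 1 := by rw [hc, ← mul_pow]; norm_num
  set m := min x y with hm
  set F : ℝ := (⌊m * c⌋ : ℝ) with hF
  have hF1 : F ≤ m * c := Int.floor_le _
  have hF2 : m * c - 1 < F := Int.sub_one_lt_floor _
  set J : DI :=
    { lo := F / c
      hi := (F + 2) / c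
      dyadic_lo := ⟨⌊m * c⌋, N, rfl⟩
      dyadic_hi := ⟨⌊m * c⌋ + 2, N, by push_cast; rfl⟩
      lo_le_hi := by
        apply div_le_div_of_nonneg_right ?_ ?_ |>.trans_eq rfl
        all_goals first | linarith | exact hcpos } with hJ
  have hlo_le : ∀ z, m ≤ z → J.lo ≤ z := by
    intro z hz
    have : F / c ≤ m := by rw [div_le_iff₀ hcpos]; exact hF1
    exact this.trans hz
  have hz_le_hi : ∀ z, z ≤ m + (1/2)^N → z ≤ J.hi := by
    intro z hz
    show z ≤ (F + 2) / c
    rw [le_div_iff₀ hcpos]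
    have : (m + (1/2)^N) * c = m * c + 1 := by
      rw [add_mul, hec]
    nlinarith
  have hxm : x - m ≤ |x - y| := by
    rcases le_total x y with h | h
    · rw [hm, min_eq_left h]; simp [abs_nonneg]
    · rw [hm, min_eq_right h]; exact le_abs_self _
  have hym : y - m ≤ |x - y| := by
    rcases le_total x y with h | h
    · rw [hm, min_eq_left h]
      calc y - x ≤ |y - x| := le_abs_self _
        _ = |x - y| := abs_sub_comm _ _
    · rw [hm, min_eq_right h]; simp [abs_nonneg]
  have hxJ : x ∈ J.set := ⟨hlo_le x (min_le_left _ _),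
    hz_le_hi x (by linarith)⟩
  have hyJ : y ∈ J.set := ⟨hlo_le y (min_le_right _ _),
    hz_le_hi y (by linarith)⟩
  have hdiam : J.diam ≤ (1/2:ℝ)^(ν n) := by
    show (F + 2) / c - F / c ≤ (1/2:ℝ)^(ν n)
    have h1 : (F + 2) / c - F / c = 2 / c := by field_simp; ring
    have h2 : (1/2:ℝ)^(ν n) = 2 / c := by
      rw [hc, hN, pow_succ, eq_div_iff (by positivity : ((2:ℝ)^(ν n) * 2) ≠ 0),
        ← mul_assoc, ← mul_pow]
      norm_num
    rw [h1, h2]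
  have hψ := (hν n).1 J ⟨x, hxJ, hx⟩ hdiam
  have hfx := mem_psi_of_mem ψ f hmono hreal x hx J hxJ
  have hfy := mem_psi_of_mem ψ f hmono hreal y hy J hyJ
  obtain ⟨hfx1, hfx2⟩ := hfx
  obtain ⟨hfy1, hfy2⟩ := hfy
  have : |f x - f y| ≤ (ψ J).diam := by
    rw [abs_sub_le_iff]
    unfold DI.diam
    constructor <;> linarith
  exact this.trans hψ
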